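/- A subalgebra A of a Boolean algebra B is a regular subalgebra of B if and only if the completion of A is a regular subalgebra (equivalently, a complete subalgebra) of the completion of B, via the induced embedding. -/

import Mathlib

/-- `f` is a Boolean algebra embedding. -/
def IsBAEmb {A B : Type*} [BooleanAlgebra A] [BooleanAlgebra B] (f : A → B) : Prop :=
  Function.Injective f ∧ (∀ x y, f (x ⊔ y) = f x ⊔ f y) ∧ (∀ x y, f (x ⊓ y) = f x ⊓ f y) ∧
    (∀ x, f xᶜ = (f x)ᶜ) ∧ f ⊥ = ⊥ ∧ f ⊤ = ⊤

/-- The image of `f` is dense in the target. -/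
def DenseIm {A B : Type*} [BooleanAlgebra A] [BooleanAlgebra B] (f : A → B) : Prop :=
  ∀ b : B, b ≠ ⊥ → ∃ a : A, f a ≠ ⊥ ∧ f a ≤ b

/-- `e : B → Bbar` realizes `Bbar` as the completion of `B`:
a dense Boolean embedding into a complete Boolean algebra. -/
def IsCompletion {B Bbar : Type*} [BooleanAlgebra B] [CompleteBooleanAlgebra Bbar]
    (e : B → Bbar) : Prop :=
  IsBAEmb e ∧ DenseIm e

/-- `f` is a regular embedding: it preserves all existing suprema. -/
def RegEmb {A B : Type*} [BooleanAlgebra A] [BooleanAlgebra B] (f : A → B) : Prop :=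
  ∀ X : Set A, ∀ a : A, IsLUB X a → IsLUB (f '' X) (f a)

section Aux

theorem le_of_diff_bot {B : Type*} [BooleanAlgebra B] {x y : B} (h : x ⊓ yᶜ = ⊥) : x ≤ y :=
  sdiff_eq_bot_iff.mp (by rw [sdiff_eq]; exact h)

theorem diff_ne_bot {B : Type*} [BooleanAlgebra B] {x y : B} (h : ¬ x ≤ y) : x ⊓ yᶜ ≠ ⊥ :=
  fun h2 => h (le_of_diff_bot h2)

theorem IsBAEmb.le_iff {A B : Type*} [BooleanAlgebra A] [BooleanAlgebra B]
    {f : A → B} (hf : IsBAEmb f) {x y : A} : f x ≤ f y ↔ x ≤ y := by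
  rw [← inf_eq_left, ← inf_eq_left (a := x), ← hf.2.2.1]
  exact ⟨fun h => hf.1 h, fun h => by rw [h]⟩

theorem IsBAEmb.bot_iff {A B : Type*} [BooleanAlgebra A] [BooleanAlgebra B]
    {f : A → B} (hf : IsBAEmb f) {x : A} : f x = ⊥ ↔ x = ⊥ :=
  ⟨fun h => hf.1 (h.trans hf.2.2.2.2.1.symm), fun h => by rw [h, hf.2.2.2.2.1]⟩

/-- Every element of the completion is the supremum of the image elements below it. -/
theorem dense_sup {B Bbar : Type*} [BooleanAlgebra B] [CompleteBooleanAlgebra Bbar]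
    {e : B → Bbar} (he : IsCompletion e) (x : Bbar) :
    sSup (e '' {b | e b ≤ x}) = x := by
  apply le_antisymm (sSup_le (by rintro _ ⟨b, hb, rfl⟩; exact hb))
  by_contra h
  obtain ⟨b, hb0, hble⟩ := he.2 _ (diff_ne_bot h)
  have hbx : e b ≤ x := hble.trans inf_le_left
  have h2 : e b ≤ sSup (e '' {b | e b ≤ x}) := le_sSup ⟨b, hbx, rfl⟩
  exact hb0 (le_bot_iff.mp ((le_inf h2 (hble.trans inf_le_right)).trans_eq inf_compl_eq_bot))

/-- A dense embedding into a complete Boolean algebra preserves existing suprema. -/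
theorem completion_regular {B Bbar : Type*} [BooleanAlgebra B] [CompleteBooleanAlgebra Bbar]
    {e : B → Bbar} (he : IsCompletion e) {X : Set B} {a : B} (h : IsLUB X a) :
    sSup (e '' X) = e a := by
  apply le_antisymm (sSup_le (by rintro _ ⟨b, hb, rfl⟩; exact he.1.le_iff.mpr (h.1 hb)))
  by_contra hc
  obtain ⟨b, hb0, hble⟩ := he.2 _ (diff_ne_bot hc)
  have hub : bᶜ ∈ upperBounds X := by
    intro x hx
    have h1 : e b ⊓ e x = ⊥ := le_bot_iff.mp
      ((inf_le_inf (hble.trans inf_le_right) (le_sSup (Set.mem_image_of_mem e hx))).trans_eq compl_inf_eq_bot)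
    have h2 : b ⊓ x = ⊥ := he.1.bot_iff.mp (by rw [he.1.2.2.1]; exact h1)
    exact le_compl_iff_disjoint_right.mpr (disjoint_iff.mpr (by rw [inf_comm]; exact h2))
  have h3 : e b ≤ (e b)ᶜ := by
    rw [← he.1.2.2.2.1]
    exact (hble.trans inf_le_left).trans (he.1.le_iff.mpr (h.2 hub))
  exact hb0 (le_bot_iff.mp ((le_inf le_rfl h3).trans_eq inf_compl_eq_bot))

/-- Key lemma: regularity of `f` transfers suprema bounds along the completions. -/
theorem keyL {A B Abar Bbar : Type*} [BooleanAlgebra A] [BooleanAlgebra B]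
    [CompleteBooleanAlgebra Abar] [CompleteBooleanAlgebra Bbar]
    {f : A → B} {eA : A → Abar} {eB : B → Bbar}
    (hf : IsBAEmb f) (heA : IsCompletion eA) (heB : IsCompletion eB)
    (hreg : RegEmb f) {S : Set A} {a : A} (h : eA a ≤ sSup (eA '' S)) :
    eB (f a) ≤ sSup (eB '' (f '' S)) := by
  -- Step 1: `a` is the LUB of `{a ⊓ s | s ∈ S}` in `A`.
  have hlub : IsLUB ((fun s => a ⊓ s) '' S) a := by
    constructor
    · rintro _ ⟨s, hs, rfl⟩; exact inf_le_left
    · intro u hu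
      by_contra hau
      have h1 : a ⊓ uᶜ ≠ ⊥ := diff_ne_bot hau
      have h2 : eA (a ⊓ uᶜ) ≠ ⊥ := fun h3 => h1 (heA.1.bot_iff.mp h3)
      have h3 : eA (a ⊓ uᶜ) ⊓ sSup (eA '' S) = eA (a ⊓ uᶜ) :=
        inf_eq_left.mpr ((heA.1.le_iff.mpr inf_le_left).trans h)
      have h4 : ∃ s ∈ S, eA (a ⊓ uᶜ) ⊓ eA s ≠ ⊥ := by
        by_contra h5
        push_neg at h5
        apply h2
        rw [← h3, inf_sSup_eq]
        apply le_bot_iff.mp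
        apply iSup_le; intro b; apply iSup_le; rintro ⟨s, hs, rfl⟩
        rw [h5 s hs]
      obtain ⟨s, hs, hne⟩ := h4
      apply hne
      rw [← heA.1.2.2.1]
      apply heA.1.bot_iff.mpr
      have hsu : a ⊓ s ≤ u := hu ⟨s, hs, rfl⟩
      have hA : (a ⊓ uᶜ) ⊓ s ≤ u := (inf_le_inf inf_le_left le_rfl).trans hsu
      have hB : (a ⊓ uᶜ) ⊓ s ≤ uᶜ := inf_le_left.trans inf_le_right
      exact le_bot_iff.mp ((le_inf hA hB).trans_eq inf_compl_eq_bot)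
  -- Step 2: apply regularity of `f`.
  have hflub : IsLUB (f '' ((fun s => a ⊓ s) '' S)) (f a) := hreg _ _ hlub
  -- Step 3: density argument in `Bbar`.
  by_contra hc
  obtain ⟨b, hb0, hble⟩ := heB.2 _ (diff_ne_bot hc)
  have hbfa : b ≤ f a := heB.1.le_iff.mp (hble.trans inf_le_left)
  have hub : bᶜ ∈ upperBounds (f '' ((fun s => a ⊓ s) '' S)) := by
    rintro _ ⟨_, ⟨s, hs, rfl⟩, rfl⟩
    have h1 : eB b ⊓ eB (f s) = ⊥ := le_bot_iff.mp
      ((inf_le_inf (hble.trans inf_le_right) (le_sSup (Set.mem_image_of_mem eB (Set.mem_image_of_mem f hs)))).trans_eq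
        compl_inf_eq_bot)
    have h2 : b ⊓ f s = ⊥ := heB.1.bot_iff.mp (by rw [heB.1.2.2.1]; exact h1)
    apply le_of_diff_bot
    rw [compl_compl, hf.2.2.1]
    apply le_bot_iff.mp
    calc f a ⊓ f s ⊓ b ≤ f s ⊓ b := inf_le_inf inf_le_right le_rfl
    _ = ⊥ := by rw [inf_comm]; exact h2
  have h3 : b ≤ bᶜ := hbfa.trans (hflub.2 hub)
  apply hb0
  apply heB.1.bot_iff.mpr
  exact le_bot_iff.mp ((le_inf le_rfl h3).trans_eq inf_compl_eq_bot)

end Aux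

theorem regular_iff_completion_regular {A B Abar Bbar : Type*}
    [BooleanAlgebra A] [BooleanAlgebra B]
    [CompleteBooleanAlgebra Abar] [CompleteBooleanAlgebra Bbar]
    (f : A → B) (eA : A → Abar) (eB : B → Bbar)
    (hf : IsBAEmb f) (heA : IsCompletion eA) (heB : IsCompletion eB) :
    RegEmb f ↔ ∃ g : Abar → Bbar, IsBAEmb g ∧
      (∀ X : Set Abar, g (sSup X) = sSup (g '' X)) ∧ ∀ a : A, g (eA a) = eB (f a) := by
  constructor
  · intro hreg
    set g : Abar → Bbar := fun x => sSup ((fun a => eB (f a)) '' {a : A | eA a ≤ x}) with hgdef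
    have hgd : ∀ x, g x = sSup ((fun a => eB (f a)) '' {a : A | eA a ≤ x}) := fun _ => rfl
    have hcomm : ∀ a : A, g (eA a) = eB (f a) := by
      intro a
      rw [hgd]
      apply le_antisymm
      · apply sSup_le
        rintro _ ⟨a', ha', rfl⟩
        exact heB.1.le_iff.mpr (hf.le_iff.mpr (heA.1.le_iff.mp ha'))
      · exact le_sSup ⟨a, le_rfl, rfl⟩
    have hmono : ∀ x y : Abar, x ≤ y → g x ≤ g y := by
      intro x y h
      rw [hgd, hgd]
      exact sSup_le_sSup (Set.image_mono fun a ha => le_trans ha h)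
    have hsSup : ∀ X : Set Abar, g (sSup X) = sSup (g '' X) := by
      intro X
      apply le_antisymm
      · rw [hgd]
        apply sSup_le
        rintro _ ⟨a, (ha : eA a ≤ sSup X), rfl⟩
        have h1 : sSup X ≤ sSup (eA '' {a' : A | ∃ x ∈ X, eA a' ≤ x}) := by
          apply sSup_le
          intro x hx
          rw [← dense_sup heA x]
          exact sSup_le_sSup (Set.image_mono (f := eA) fun b hb => ⟨x, hx, hb⟩)
        have h2 := keyL hf heA heB hreg (ha.trans h1)
        refine h2.trans (sSup_le ?_)
        rintro _ ⟨_, ⟨a', ⟨x, hx, ha'⟩, rfl⟩, rfl⟩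
        have : eB (f a') ≤ g x := by rw [hgd]; exact le_sSup ⟨a', ha', rfl⟩
        exact this.trans (le_sSup ⟨x, hx, rfl⟩)
      · apply sSup_le
        rintro _ ⟨x, hx, rfl⟩
        exact hmono _ _ (le_sSup hx)
    have hbot : g ⊥ = ⊥ := by
      rw [hgd]
      apply le_bot_iff.mp
      apply sSup_le
      rintro _ ⟨a, ha, rfl⟩
      have h1 : a = ⊥ := heA.1.bot_iff.mp (le_bot_iff.mp ha)
      show eB (f a) ≤ ⊥
      rw [h1, hf.2.2.2.2.1, heB.1.2.2.2.2.1]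
    have hsup : ∀ x y : Abar, g (x ⊔ y) = g x ⊔ g y := by
      intro x y
      rw [← sSup_pair, hsSup, Set.image_pair, sSup_pair]
    have htop : g ⊤ = ⊤ := by
      have h1 := hcomm ⊤
      rw [heA.1.2.2.2.2.2, hf.2.2.2.2.2, heB.1.2.2.2.2.2] at h1
      exact h1
    have hinf : ∀ x y : Abar, g (x ⊓ y) = g x ⊓ g y := by
      intro x y
      apply le_antisymm (le_inf (hmono _ _ inf_le_left) (hmono _ _ inf_le_right))
      rw [hgd x, hgd y, hgd (x ⊓ y), inf_sSup_eq]
      apply iSup_le; intro b; apply iSup_le; rintro ⟨a2, ha2, rfl⟩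
      rw [sSup_inf_eq]
      apply iSup_le; intro c; apply iSup_le; rintro ⟨a1, ha1, rfl⟩
      have h1 : eB (f a1) ⊓ eB (f a2) = eB (f (a1 ⊓ a2)) := by
        rw [hf.2.2.1, heB.1.2.2.1]
      rw [h1]
      refine le_sSup ⟨a1 ⊓ a2, ?_, rfl⟩
      show eA (a1 ⊓ a2) ≤ x ⊓ y
      rw [heA.1.2.2.1]
      exact inf_le_inf ha1 ha2
    have hnonbot : ∀ x : Abar, x ≠ ⊥ → g x ≠ ⊥ := by
      intro x hx hgx
      obtain ⟨a, ha0, hax⟩ := heA.2 x hx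
      have h1 : a ≠ ⊥ := fun h => ha0 (heA.1.bot_iff.mpr h)
      have h2 : eB (f a) ≠ ⊥ := fun h => h1 (hf.bot_iff.mp (heB.1.bot_iff.mp h))
      have h3 : eB (f a) ≤ g x := by rw [hgd]; exact le_sSup ⟨a, hax, rfl⟩
      exact h2 (le_bot_iff.mp (h3.trans_eq hgx))
    have hinj : Function.Injective g := by
      intro x y hxy
      have k : ∀ u v : Abar, g u = g v → u ≤ v := by
        intro u v huv
        have h1 : g (u ⊓ vᶜ) = ⊥ := by
          rw [hinf, huv, ← hinf, inf_compl_eq_bot, hbot]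
        have h2 : u ⊓ vᶜ = ⊥ := by
          by_contra h3
          exact hnonbot _ h3 h1
        exact le_of_diff_bot h2
      exact le_antisymm (k x y hxy) (k y x hxy.symm)
    have hcompl : ∀ x : Abar, g xᶜ = (g x)ᶜ := by
      intro x
      have h1 : g x ⊓ g xᶜ = ⊥ := by rw [← hinf, inf_compl_eq_bot, hbot]
      have h2 : g x ⊔ g xᶜ = ⊤ := by rw [← hsup, sup_compl_eq_top, htop]
      exact ((IsCompl.of_eq h1 h2).compl_eq).symm
    exact ⟨g, ⟨hinj, hsup, hinf, hcompl, hbot, htop⟩, hsSup, hcomm⟩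
  · rintro ⟨g, hg, hgsSup, hgcomm⟩ X a hlub
    constructor
    · rintro _ ⟨x, hx, rfl⟩
      exact hf.le_iff.mpr (hlub.1 hx)
    · intro b hb
      apply heB.1.le_iff.mp
      have h1 : sSup (eA '' X) = eA a := completion_regular heA hlub
      have h2 : eB (f a) = sSup (eB '' (f '' X)) := by
        rw [← hgcomm, ← h1, hgsSup]
        congr 1
        rw [Set.image_image, Set.image_image]
        exact Set.image_congr fun a _ => hgcomm a
      rw [h2]
      apply sSup_le
      rintro _ ⟨_, ⟨x, hx, rfl⟩, rfl⟩
      exact heB.1.le_iff.mpr (hb ⟨x, hx, rfl⟩)
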